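/- If X is a Hausdorff pseudoradial space, then the tightness of X is at most L(X) · F(X), where L(X) is the Lindelöf degree and F(X) is the supremum of cardinalities of free sequences in X. -/

import Mathlib

open Cardinal Set TopologicalSpace

universe u

/-- A transfinite sequence indexed by a linearly ordered type is *free* if for every index `i`,
the closure of the initial segment `{x j : j < i}` is disjoint from the closure of the
final segment `{x j : i ≤ j}`. -/
def IsFreeSeq {X : Type u} [TopologicalSpace X] {ι : Type u} [LinearOrder ι] (x : ι → X) :
    Prop :=
  ∀ i : ι, closure (x '' {j | j < i}) ∩ closure (x '' {j | i ≤ j}) = ∅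

/-- `F(X)`: the supremum (together with `ℵ₀`) of the cardinalities (= lengths) of free
sequences in `X`, free sequences being indexed by ordinals. -/
noncomputable def freeSup (X : Type u) [TopologicalSpace X] : Cardinal.{u} :=
  ℵ₀ ⊔ sSup {c : Cardinal.{u} |
    ∃ (o : Ordinal.{u}) (x : o.ToType → X), IsFreeSeq x ∧ c = o.card}

/-- The Lindelöf degree `L(X)`: the least infinite cardinal `κ` such that every open cover
of `X` has a subcover of size at most `κ`. -/
noncomputable def LindelofDeg (X : Type u) [TopologicalSpace X] : Cardinal.{u} :=
  sInf {κ : Cardinal.{u} | ℵ₀ ≤ κ ∧ ∀ U : Set (Set X), (∀ u ∈ U, IsOpen u) →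
    ⋃₀ U = Set.univ → ∃ V ⊆ U, #V ≤ κ ∧ ⋃₀ V = Set.univ}

/-- The tightness `t(X)`: the least infinite cardinal `κ` such that whenever `p ∈ closure A`
there is `B ⊆ A` with `|B| ≤ κ` and `p ∈ closure B`. -/
noncomputable def tightnessCard (X : Type u) [TopologicalSpace X] : Cardinal.{u} :=
  sInf {κ : Cardinal.{u} | ℵ₀ ≤ κ ∧ ∀ (A : Set X) (p : X), p ∈ closure A →
    ∃ B ⊆ A, #B ≤ κ ∧ p ∈ closure B}

/-- The set-tightness `t_s(X)`: the least infinite cardinal `κ` such that for every non-closed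
`A` and `p ∈ closure A \ A` there is a `≤ κ`-sized family of subsets of `A` whose union has
`p` in its closure while no member does. -/
noncomputable def setTightness (X : Type u) [TopologicalSpace X] : Cardinal.{u} :=
  sInf {κ : Cardinal.{u} | ℵ₀ ≤ κ ∧ ∀ (A : Set X) (p : X), p ∈ closure A \ A →
    ∃ (ι : Type u) (B : ι → Set X), #ι ≤ κ ∧ (∀ i, B i ⊆ A) ∧
      p ∈ closure (⋃ i, B i) ∧ ∀ i, p ∉ closure (B i)}

/-- A transfinite sequence `x` converges to `p` if every open neighbourhood of `p` contains
a final segment of the sequence. -/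
def ConvergesTo {X : Type u} [TopologicalSpace X] {ι : Type u} [LinearOrder ι]
    (x : ι → X) (p : X) : Prop :=
  ∀ V : Set X, IsOpen V → p ∈ V → ∃ b : ι, ∀ a : ι, b ≤ a → x a ∈ V

/-- A sequence converging to `p` is *thin* if `p` is not in the closure of any proper
initial segment. -/
def IsThin {X : Type u} [TopologicalSpace X] {ι : Type u} [LinearOrder ι]
    (x : ι → X) (p : X) : Prop :=
  ∀ i : ι, p ∉ closure (x '' {j | j < i})

/-- `X` is pseudoradial if every non-closed set contains a transfinite sequence converging
to a point of its closure outside of it. -/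
def IsPseudoradial (X : Type u) [TopologicalSpace X] : Prop :=
  ∀ A : Set X, ¬ IsClosed A → ∃ p ∈ closure A \ A, ∃ (o : Ordinal.{u}) (x : o.ToType → X),
    (∀ i, x i ∈ A) ∧ ConvergesTo x p

/-- `X` is almost radial if every non-closed set contains a thin transfinite sequence
converging to a point of its closure outside of it. -/
def IsAlmostRadial (X : Type u) [TopologicalSpace X] : Prop :=
  ∀ A : Set X, ¬ IsClosed A → ∃ p ∈ closure A \ A, ∃ (o : Ordinal.{u}) (x : o.ToType → X),
    (∀ i, x i ∈ A) ∧ ConvergesTo x p ∧ IsThin x p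

/-- `X` is radial if for every non-closed set `A` and every point `p ∈ closure A \ A` there is
a transfinite sequence in `A` converging to `p`. -/
def IsRadial (X : Type u) [TopologicalSpace X] : Prop :=
  ∀ A : Set X, ¬ IsClosed A → ∀ p ∈ closure A \ A, ∃ (o : Ordinal.{u}) (x : o.ToType → X),
    (∀ i, x i ∈ A) ∧ ConvergesTo x p

/-- The radial character `σ_C(X)`: the least infinite cardinal `κ` such that every non-closed
set contains a thin transfinite sequence of length at most `κ` converging outside. -/
noncomputable def radialChar (X : Type u) [TopologicalSpace X] : Cardinal.{u} :=
  sInf {κ : Cardinal.{u} | ℵ₀ ≤ κ ∧ ∀ A : Set X, ¬ IsClosed A →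
    ∃ p ∈ closure A \ A, ∃ (o : Ordinal.{u}) (x : o.ToType → X),
      o.card ≤ κ ∧ (∀ i, x i ∈ A) ∧ ConvergesTo x p ∧ IsThin x p}

/-- The `G_δ`-modification of the topology of `X`: the topology generated by the countable
intersections of open sets. -/
def GdeltaTop (X : Type u) [TopologicalSpace X] : TopologicalSpace X :=
  generateFrom {s : Set X | ∃ f : ℕ → Set X, (∀ n, IsOpen (f n)) ∧ s = ⋂ n, f n}

section AuxForStatement2

variable {X : Type u} [TopologicalSpace X]

/-- A free sequence is injective. -/
lemma IsFreeSeq.injective' {ι : Type u} [LinearOrder ι] {x : ι → X} (h : IsFreeSeq x) :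
    Function.Injective x := by
  have key : ∀ a b : ι, a < b → x a ≠ x b := by
    intro a b hab heq
    have h1 : x a ∈ closure (x '' {j | j < b}) :=
      subset_closure (Set.mem_image_of_mem x hab)
    have h2 : x a ∈ closure (x '' {j | b ≤ j}) := by
      rw [heq]; exact subset_closure (Set.mem_image_of_mem x le_rfl)
    exact Set.eq_empty_iff_forall_notMem.1 (h b) (x a) ⟨h1, h2⟩
  intro a b heq
  rcases lt_trichotomy a b with hlt | he | hgt
  · exact absurd heq (key a b hlt)
  · exact he
  · exact absurd heq.symm (key b a hgt)

/-- The length of any free sequence is bounded by `freeSup`. -/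
lemma card_le_freeSup {o : Ordinal.{u}} {x : o.ToType → X} (h : IsFreeSeq x) :
    o.card ≤ freeSup X := by
  have hb : BddAbove {c : Cardinal.{u} |
      ∃ (o : Ordinal.{u}) (x : o.ToType → X), IsFreeSeq x ∧ c = o.card} := by
    refine ⟨#X, ?_⟩
    rintro c ⟨o', x', hx', rfl⟩
    rw [← Cardinal.mk_toType]
    exact Cardinal.mk_le_of_injective hx'.injective'
  have hmem : o.card ∈ {c : Cardinal.{u} |
      ∃ (o : Ordinal.{u}) (x : o.ToType → X), IsFreeSeq x ∧ c = o.card} := ⟨o, x, h, rfl⟩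
  exact le_trans (le_csSup hb hmem) le_sup_right

/-- Transfinite recursion producing an increasing sequence with a step-wise property. -/
lemma exists_rec_seq {I J : Type u} [LinearOrder I] [WellFoundedLT I] [LinearOrder J]
    (P : Set J → J → Prop) (κ : Cardinal.{u})
    (hseg : ∀ i : I, #{j : I | j < i} ≤ κ)
    (hstep : ∀ s : Set J, #s ≤ κ → ∃ t : J, (∀ j ∈ s, j < t) ∧ P s t) :
    ∃ f : I → J, StrictMono f ∧ ∀ i : I, P (f '' {j | j < i}) (f i) := by
  have wf : WellFounded ((· < ·) : I → I → Prop) := IsWellFounded.wf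
  let F : ∀ i : I, (∀ j : I, j < i → J) → J := fun i rec =>
    Classical.choose (hstep (Set.range fun j : {j : I | j < i} => rec j.1 j.2)
      (le_trans Cardinal.mk_range_le (hseg i)))
  let f : I → J := wf.fix F
  have him : ∀ i : I, (Set.range fun j : {j : I | j < i} => f j.1) = f '' {j : I | j < i} :=
    fun i => (Set.image_eq_range f _).symm
  have hkey : ∀ i : I, (∀ y ∈ f '' {j : I | j < i}, y < f i) ∧ P (f '' {j : I | j < i}) (f i) := by
    intro i
    have hfeq : f i = Classical.choose (hstep (Set.range fun j : {j : I | j < i} => f j.1)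
        (le_trans Cardinal.mk_range_le (hseg i))) := wf.fix_eq F i
    have hs := Classical.choose_spec (hstep (Set.range fun j : {j : I | j < i} => f j.1)
      (le_trans Cardinal.mk_range_le (hseg i)))
    rw [← hfeq] at hs
    obtain ⟨h1, h2⟩ := hs
    constructor
    · intro y hy
      rw [← him i] at hy
      exact h1 y hy
    · rwa [him i] at h2
  refine ⟨f, ?_, fun i => (hkey i).2⟩
  intro a b hab
  exact (hkey b).1 (f a) (Set.mem_image_of_mem f hab)

end AuxForStatement2

/-- for a Hausdorff pseudoradial space, `t(X) ≤ L(X) · F(X)`. -/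
theorem tightness_le_mul_of_pseudoradial {X : Type u} [TopologicalSpace X] [T2Space X]
    (hX : IsPseudoradial X) :
    tightnessCard X ≤ LindelofDeg X * freeSup X := by
  classical
  set κ := LindelofDeg X * freeSup X with hκdef
  have hFinf : ℵ₀ ≤ freeSup X := le_sup_left
  have hLmem : LindelofDeg X ∈ {κ : Cardinal.{u} | ℵ₀ ≤ κ ∧ ∀ U : Set (Set X),
      (∀ u ∈ U, IsOpen u) → ⋃₀ U = Set.univ → ∃ V ⊆ U, #V ≤ κ ∧ ⋃₀ V = Set.univ} := by
    apply csInf_mem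
    refine ⟨ℵ₀ ⊔ 2 ^ #X, le_sup_left, ?_⟩
    intro U hU hUc
    refine ⟨U, Set.Subset.rfl, ?_, hUc⟩
    calc #U ≤ #(Set X) := Cardinal.mk_set_le U
    _ = 2 ^ #X := Cardinal.mk_set
    _ ≤ _ := le_sup_right
  obtain ⟨hLinf, hLcov⟩ := hLmem
  have hκmax : κ = max (LindelofDeg X) (freeSup X) := Cardinal.mul_eq_max hLinf hFinf
  have hLκ : LindelofDeg X ≤ κ := hκmax ▸ le_max_left _ _
  have hFκ : freeSup X ≤ κ := hκmax ▸ le_max_right _ _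
  have hκinf : ℵ₀ ≤ κ := le_trans hLinf hLκ
  apply csInf_le'
  refine ⟨hκinf, ?_⟩
  intro A p hp
  set A' := {y : X | ∃ B ⊆ A, #B ≤ κ ∧ y ∈ closure B} with hA'def
  have hAA' : A ⊆ A' := by
    intro a ha
    exact ⟨{a}, Set.singleton_subset_iff.2 ha,
      by rw [Cardinal.mk_singleton]; exact le_trans Cardinal.one_le_aleph0 hκinf,
      subset_closure rfl⟩
  have absorb : ∀ S : Set X, S ⊆ A' → #S ≤ κ → closure S ⊆ A' := by
    intro S hSA hScard
    choose B hB1 hB2 hB3 using fun s : S => (hSA s.2 : s.1 ∈ A')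
    have hTA : (⋃ s : S, B s) ⊆ A := Set.iUnion_subset fun s => hB1 s
    have hTcard : #(⋃ s : S, B s) ≤ κ := by
      refine le_trans (Cardinal.mk_iUnion_le B) ?_
      have h1 : #S * ⨆ s : S, #(B s) ≤ κ * κ :=
        mul_le_mul' hScard (ciSup_le' fun s => hB2 s)
      exact le_trans h1 (le_of_eq (Cardinal.mul_eq_self hκinf))
    intro y hy
    refine ⟨⋃ s : S, B s, hTA, hTcard, ?_⟩
    have hS : S ⊆ closure (⋃ s : S, B s) := fun s hs =>
      closure_mono (Set.subset_iUnion B ⟨s, hs⟩) (hB3 ⟨s, hs⟩)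
    exact closure_minimal hS isClosed_closure hy
  have hclosed : IsClosed A' := by
    by_contra hnc
    obtain ⟨q, hq, o, x, hxA, hconv⟩ := hX A' hnc
    obtain ⟨hq1, hq2⟩ := hq
    haveI : Nonempty o.ToType := by
      obtain ⟨b, -⟩ := hconv Set.univ isOpen_univ (Set.mem_univ q)
      exact ⟨b⟩
    have hqnotin : ∀ S : Set X, S ⊆ A' → #S ≤ κ → q ∉ closure S :=
      fun S h1 h2 hqS => hq2 (absorb S h1 h2 hqS)
    -- every small subset of the index type has a strict upper bound
    have hub : ∀ S : Set o.ToType, #S ≤ κ → ∃ t : o.ToType, ∀ s ∈ S, s < t := by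
      intro S hS
      by_contra hcon
      push_neg at hcon
      apply hqnotin (x '' S) (by rintro - ⟨s, -, rfl⟩; exact hxA s)
        (le_trans Cardinal.mk_image_le hS)
      rw [mem_closure_iff]
      intro V hV hqV
      obtain ⟨b, hb⟩ := hconv V hV hqV
      obtain ⟨s, hsS, hbs⟩ := hcon b
      exact ⟨x s, hb s hbs, Set.mem_image_of_mem x hsS⟩
    -- separation of tails from closed sets avoiding q
    have hsep : ∀ C : Set X, IsClosed C → q ∉ C →
        ∃ b : o.ToType, closure (x '' {j | b ≤ j}) ∩ C = ∅ := by
      intro C hC hqC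
      have hzq : ∀ z : C, (z : X) ≠ q := fun z hz => hqC (hz ▸ z.2)
      choose Uz Wz hUo hWo hzU hqW hdisj using fun z : C => t2_separation (hzq z)
      have hcov : ⋃₀ (insert Cᶜ (Set.range Uz)) = Set.univ := by
        ext y
        simp only [Set.mem_sUnion, Set.mem_univ, iff_true]
        by_cases hy : y ∈ C
        · exact ⟨Uz ⟨y, hy⟩, Set.mem_insert_of_mem _ ⟨⟨y, hy⟩, rfl⟩, hzU ⟨y, hy⟩⟩
        · exact ⟨Cᶜ, Set.mem_insert _ _, hy⟩
      have hopen : ∀ u ∈ insert Cᶜ (Set.range Uz), IsOpen u := by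
        intro u hu
        rcases Set.mem_insert_iff.1 hu with rfl | ⟨z, rfl⟩
        · exact hC.isOpen_compl
        · exact hUo z
      obtain ⟨𝒱, h𝒱U, h𝒱card, h𝒱cov⟩ := hLcov (insert Cᶜ (Set.range Uz)) hopen hcov
      let g : 𝒱 → o.ToType := fun v =>
        if h : ∃ z : C, (v : Set X) = Uz z then
          Classical.choose (hconv (Wz h.choose) (hWo h.choose) (hqW h.choose))
        else Classical.arbitrary _
      obtain ⟨t, ht⟩ := hub (Set.range g)
        (le_trans Cardinal.mk_range_le (le_trans h𝒱card hLκ))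
      refine ⟨t, ?_⟩
      rw [Set.eq_empty_iff_forall_notMem]
      rintro y ⟨hy1, hy2⟩
      obtain ⟨v, hv𝒱, hyv⟩ : ∃ v ∈ 𝒱, y ∈ v := by
        have : y ∈ ⋃₀ 𝒱 := h𝒱cov.symm ▸ Set.mem_univ y
        exact Set.mem_sUnion.1 this
      have hvU : v ∈ insert Cᶜ (Set.range Uz) := h𝒱U hv𝒱
      have hex : ∃ z : C, v = Uz z := by
        rcases Set.mem_insert_iff.1 hvU with rfl | ⟨z, rfl⟩
        · exact absurd hy2 hyv
        · exact ⟨z, rfl⟩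
      have hgv : g ⟨v, hv𝒱⟩ =
          Classical.choose (hconv (Wz hex.choose) (hWo hex.choose) (hqW hex.choose)) :=
        dif_pos hex
      have hbz := Classical.choose_spec (hconv (Wz hex.choose) (hWo hex.choose)
        (hqW hex.choose))
      have htail : x '' {j | t ≤ j} ⊆ (Uz hex.choose)ᶜ := by
        rintro - ⟨j, hj, rfl⟩
        have hbt : g ⟨v, hv𝒱⟩ < t := ht _ ⟨⟨v, hv𝒱⟩, rfl⟩
        rw [hgv] at hbt
        have hW : x j ∈ Wz hex.choose := hbz j (le_trans hbt.le hj)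
        exact fun hxj => Set.disjoint_left.1 (hdisj hex.choose) hxj hW
      have hcl : closure (x '' {j | t ≤ j}) ⊆ (Uz hex.choose)ᶜ :=
        closure_minimal htail (hUo hex.choose).isClosed_compl
      exact hcl hy1 (hex.choose_spec ▸ hyv)
    -- the recursion step
    have hstep : ∀ s : Set o.ToType, #s ≤ κ → ∃ t : o.ToType,
        (∀ j ∈ s, j < t) ∧ closure (x '' {j | t ≤ j}) ∩ closure (x '' s) = ∅ := by
      intro s hs
      have hqC : q ∉ closure (x '' s) := hqnotin (x '' s)
        (by rintro - ⟨j, -, rfl⟩; exact hxA j) (le_trans Cardinal.mk_image_le hs)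
      obtain ⟨b, hb⟩ := hsep (closure (x '' s)) isClosed_closure hqC
      obtain ⟨t, ht⟩ := hub (insert b s) (by
        refine le_trans Cardinal.mk_insert_le ?_
        calc #s + 1 ≤ κ + κ := add_le_add hs (le_trans Cardinal.one_le_aleph0 hκinf)
        _ = κ := Cardinal.add_eq_self hκinf)
      refine ⟨t, fun j hj => ht j (Set.mem_insert_of_mem _ hj), ?_⟩
      rw [Set.eq_empty_iff_forall_notMem]
      rintro y ⟨hy1, hy2⟩
      have hbt : b ≤ t := (ht b (Set.mem_insert _ _)).le
      have hsub : x '' {j | t ≤ j} ⊆ x '' {j | b ≤ j} :=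
        Set.image_mono fun j hj => le_trans hbt hj
      exact Set.eq_empty_iff_forall_notMem.1 hb y ⟨closure_mono hsub hy1, hy2⟩
    -- build a free sequence of length κ⁺
    haveI : Nonempty (Order.succ κ).ord.ToType := by
      rw [Ordinal.toType_nonempty_iff_ne_zero]
      have h0 : (0 : Ordinal.{u}) < (Order.succ κ).ord := by
        rw [Cardinal.lt_ord, Ordinal.card_zero]
        exact lt_of_le_of_lt (zero_le (a := κ)) (Order.lt_succ κ)
      exact ne_of_gt h0
    have hseg : ∀ i : (Order.succ κ).ord.ToType, #{j : (Order.succ κ).ord.ToType | j < i} ≤ κ := by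
      intro i
      have h1 : #(Set.Iio i) < Order.succ κ := Cardinal.mk_Iio_ord_toType i
      exact Order.lt_succ_iff.1 h1
    obtain ⟨f, hfmono, hfP⟩ := exists_rec_seq
      (fun (s : Set o.ToType) (t : o.ToType) =>
        closure (x '' {j | t ≤ j}) ∩ closure (x '' s) = ∅) κ hseg hstep
    have hfree : IsFreeSeq (x ∘ f) := by
      intro i
      rw [Set.eq_empty_iff_forall_notMem]
      rintro y ⟨hy1, hy2⟩
      have h1 : (x ∘ f) '' {j | j < i} = x '' (f '' {j | j < i}) := Set.image_comp x f _
      have h2 : (x ∘ f) '' {j | i ≤ j} ⊆ x '' {a | f i ≤ a} := by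
        rintro - ⟨j, hj, rfl⟩
        exact ⟨f j, hfmono.monotone hj, rfl⟩
      rw [h1] at hy1
      exact Set.eq_empty_iff_forall_notMem.1 (hfP i) y ⟨closure_mono h2 hy2, hy1⟩
    have hcard : Order.succ κ ≤ freeSup X := by
      have h := card_le_freeSup hfree
      rwa [Cardinal.card_ord] at h
    exact absurd (le_trans hcard hFκ) (not_le.2 (Order.lt_succ κ))
  have hcl : closure A ⊆ A' := closure_minimal hAA' hclosed
  exact hcl hp
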